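/- For every positive rational number r, there exists a finite partially ordered set P such that |Aut(P)| / |P| = r, where Aut(P) is the group of order automorphisms of P. -/

import Mathlib

/-- `m` disjoint copies of a chain with `k` elements. -/
@[ext]
structure ChainCopies (m k : ℕ) where
  c : Fin m
  p : Fin k

namespace ChainCopies

variable {m k : ℕ}

/-- `ChainCopies m k` is just `Fin m × Fin k` as a type. -/
def prodEquiv : ChainCopies m k ≃ Fin m × Fin k where
  toFun x := (x.c, x.p)
  invFun y := ⟨y.1, y.2⟩
  left_inv x := rfl
  right_inv y := rfl

instance : PartialOrder (ChainCopies m k) where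
  le x y := x.c = y.c ∧ x.p ≤ y.p
  le_refl x := ⟨rfl, le_refl _⟩
  le_trans x y z h1 h2 := ⟨h1.1.trans h2.1, h1.2.trans h2.2⟩
  le_antisymm x y h1 h2 := ChainCopies.ext h1.1 (le_antisymm h1.2 h2.2)

lemma le_def (x y : ChainCopies m k) : x ≤ y ↔ x.c = y.c ∧ x.p ≤ y.p := Iff.rfl

instance : Finite (ChainCopies m k) := Finite.of_equiv _ prodEquiv.symm

lemma card_eq : Nat.card (ChainCopies m k) = m * k := by
  rw [Nat.card_congr prodEquiv]
  simp [Nat.card_eq_fintype_card]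

/-- the bottom element of each chain -/
def z (hk : 0 < k) : Fin k := ⟨0, hk⟩

lemma fst_eq (hk : 0 < k) (f : ChainCopies m k ≃o ChainCopies m k) (i : Fin m) (a : Fin k) :
    (f ⟨i, a⟩).c = (f ⟨i, z hk⟩).c := by
  have h : (⟨i, z hk⟩ : ChainCopies m k) ≤ ⟨i, a⟩ := ⟨rfl, Fin.le_def.2 (Nat.zero_le _)⟩
  exact ((le_def _ _).1 (f.monotone h)).1.symm

lemma snd_eq (hk : 0 < k) (f : ChainCopies m k ≃o ChainCopies m k) (i : Fin m) (a : Fin k) :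
    (f ⟨i, a⟩).p = a := by
  set g : Fin k → Fin k := fun b => (f ⟨i, b⟩).p with hg
  have hmono : StrictMono g := by
    intro b c hbc
    have hlt : (⟨i, b⟩ : ChainCopies m k) < ⟨i, c⟩ := by
      refine lt_of_le_of_ne ⟨rfl, le_of_lt hbc⟩ ?_
      intro h
      exact absurd (congrArg ChainCopies.p h) (ne_of_lt hbc)
    have hlt' := f.strictMono hlt
    have hle := ((le_def _ _).1 hlt'.le).2
    have hne : (f ⟨i, b⟩).p ≠ (f ⟨i, c⟩).p := by
      intro h
      exact hlt'.ne (ChainCopies.ext (by rw [fst_eq hk f i b, fst_eq hk f i c]) h)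
    exact lt_of_le_of_ne hle hne
  have hsurj : Function.Surjective g :=
    Finite.surjective_of_injective hmono.injective
  have : g = id := by
    apply (hmono.range_inj strictMono_id).1
    rw [Set.range_id, Set.range_eq_univ]
    exact hsurj
  exact congrFun this a

lemma apply_eq (hk : 0 < k) (f : ChainCopies m k ≃o ChainCopies m k) (x : ChainCopies m k) :
    f x = ⟨(f ⟨x.c, z hk⟩).c, x.p⟩ := by
  refine ChainCopies.ext ?_ ?_
  · exact fst_eq hk f x.c x.p
  · exact snd_eq hk f x.c x.p

/-- Order iso from a permutation of the copies. -/
def ofPerm (σ : Equiv.Perm (Fin m)) : ChainCopies m k ≃o ChainCopies m k where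
  toFun x := ⟨σ x.c, x.p⟩
  invFun x := ⟨σ.symm x.c, x.p⟩
  left_inv x := by simp
  right_inv x := by simp
  map_rel_iff' := by
    intro x y
    simp only [le_def, Equiv.coe_fn_mk, σ.injective.eq_iff]

/-- The automorphism group is the permutations of the copies. -/
def autEquiv (hk : 0 < k) : (ChainCopies m k ≃o ChainCopies m k) ≃ Equiv.Perm (Fin m) where
  toFun f :=
    { toFun := fun i => (f ⟨i, z hk⟩).c
      invFun := fun i => (f.symm ⟨i, z hk⟩).c
      left_inv := by
        intro i
        have h1 : f ⟨i, z hk⟩ = ⟨(f ⟨i, z hk⟩).c, z hk⟩ := apply_eq hk f _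
        have h2 : f.symm ⟨(f ⟨i, z hk⟩).c, z hk⟩ = ⟨i, z hk⟩ := by
          rw [← h1]; exact f.symm_apply_apply _
        simpa using congrArg ChainCopies.c h2
      right_inv := by
        intro i
        have h1 : f.symm ⟨i, z hk⟩ = ⟨(f.symm ⟨i, z hk⟩).c, z hk⟩ := apply_eq hk f.symm _
        have h2 : f ⟨(f.symm ⟨i, z hk⟩).c, z hk⟩ = ⟨i, z hk⟩ := by
          rw [← h1]; exact f.apply_symm_apply _
        simpa using congrArg ChainCopies.c h2 }
  invFun σ := ofPerm σ
  left_inv := by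
    intro f
    ext x
    · rw [apply_eq hk f x]; rfl
    · rw [apply_eq hk f x]; rfl
  right_inv := by
    intro σ
    ext i
    rfl

lemma card_aut (hk : 0 < k) :
    Nat.card (ChainCopies m k ≃o ChainCopies m k) = Nat.factorial m := by
  rw [Nat.card_congr (autEquiv hk), Nat.card_eq_fintype_card, Fintype.card_perm,
    Fintype.card_fin]

end ChainCopies

/-- For every positive rational `r` there is a finite poset `P` with
`|Aut(P)| / |P| = r`. -/
theorem exists_poset_aut_card_div_card_eq (r : ℚ) (hr : 0 < r) :
    ∃ (P : Type) (_ : Finite P) (_ : PartialOrder P),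
      (Nat.card (P ≃o P) : ℚ) / (Nat.card P : ℚ) = r := by
  obtain ⟨s, hs⟩ : ∃ s : ℕ, r.num.toNat = s + 1 := by
    have : 0 < r.num.toNat := by
      have := Rat.num_pos.2 hr
      omega
    exact ⟨r.num.toNat - 1, by omega⟩
  set q := r.den with hq
  have hq0 : 0 < q := r.pos
  refine ⟨ChainCopies (s + 2) (Nat.factorial s * q), inferInstance, inferInstance, ?_⟩
  have hk : 0 < Nat.factorial s * q := Nat.mul_pos (Nat.factorial_pos s) hq0
  rw [ChainCopies.card_aut hk, ChainCopies.card_eq]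
  have hnum : (r.num : ℚ) = ((s + 1 : ℕ) : ℚ) := by
    rw [← hs]
    norm_cast
    omega
  have hr' : r = ((s + 1 : ℕ) : ℚ) / (q : ℚ) := by
    rw [← hnum, hq, Rat.num_div_den]
  rw [hr']
  rw [div_eq_div_iff (by positivity) (by positivity)]
  push_cast
  rw [show (s + 2).factorial = (s+2) * ((s+1) * s.factorial) by
    rw [Nat.factorial_succ, Nat.factorial_succ]]
  push_cast
  ring
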